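/- Let V be a finite-dimensional real vector subspace of the space of functions [0,∞) → ℝ consisting of differentiable functions. (a) If V is spanned by {Re(f^q), Im(f^q) : q ∈ Q} (restricted to [0,∞)) for some closed set of exponents Q, then V is closed under differentiation, i.e. f ∈ V implies f' ∈ V. (b) Conversely, if V is closed under differentiation, then Q = {q ∈ ℕ × ℂ : both Re(f^q) and Im(f^q), restricted to [0,∞), lie in V} is a finite closed set of exponents and {Re(f^q), Im(f^q) : q ∈ Q} spans V. -/

import Mathlib

open Set

/-- The function `f^q(t) = t^m e^{λt}` associated with the exponent `q = (m, λ)`. -/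
noncomputable def fexp (q : ℕ × ℂ) (t : ℝ) : ℂ :=
  (t : ℂ) ^ q.1 * Complex.exp (q.2 * t)

/-- Restriction of a function on `ℝ` to `[0,∞)`. -/
def rst (F : ℝ → ℝ) : ↥(Set.Ici (0:ℝ)) → ℝ := fun t => F t

/-- Extension of a function on `[0,∞)` to `ℝ` by `0`. -/
noncomputable def ext (f : ↥(Set.Ici (0:ℝ)) → ℝ) : ℝ → ℝ :=
  fun t => if h : t ∈ Set.Ici (0:ℝ) then f ⟨t, h⟩ else 0

/-- The derivative of a function on `[0,∞)` (one-sided at `0`). -/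
noncomputable def derOn (f : ↥(Set.Ici (0:ℝ)) → ℝ) : ↥(Set.Ici (0:ℝ)) → ℝ :=
  fun t => derivWithin (ext f) (Set.Ici 0) (t : ℝ)

/-- A set of exponents is closed if it is stable under conjugation
`(m,λ) ↦ (m, conj λ)` and under `(m,λ) ↦ (max(0,m−1), λ)`. -/
def ExpClosed (Q : Set (ℕ × ℂ)) : Prop :=
  ∀ q ∈ Q, ((q.1, (starRingEnd ℂ) q.2) ∈ Q ∧ (q.1 - 1, q.2) ∈ Q)

/-- The real and imaginary parts of the `f^q`, `q ∈ Q`, restricted to `[0,∞)`. -/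
noncomputable def reimSet (Q : Set (ℕ × ℂ)) : Set (↥(Set.Ici (0:ℝ)) → ℝ) :=
  {g | ∃ q ∈ Q, g = rst (fun t => (fexp q t).re) ∨ g = rst (fun t => (fexp q t).im)}

/-- The set of exponents `q` such that both `Re f^q` and `Im f^q`, restricted
to `[0,∞)`, lie in `V`. -/
noncomputable def expSet (V : Submodule ℝ (↥(Set.Ici (0:ℝ)) → ℝ)) : Set (ℕ × ℂ) :=
  {q | rst (fun t => (fexp q t).re) ∈ V ∧ rst (fun t => (fexp q t).im) ∈ V}

lemma ext_apply_mem (f : ↥(Set.Ici (0:ℝ)) → ℝ) {t : ℝ} (ht : t ∈ Set.Ici (0:ℝ)) :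
    ext f t = f ⟨t, ht⟩ := dif_pos ht

lemma ext_add (f g : ↥(Set.Ici (0:ℝ)) → ℝ) : ext (f + g) = ext f + ext g := by
  funext t; by_cases h : t ∈ Set.Ici (0:ℝ) <;> simp [_root_.ext, h]

lemma ext_smul (r : ℝ) (f : ↥(Set.Ici (0:ℝ)) → ℝ) : ext (r • f) = r • ext f := by
  funext t; by_cases h : t ∈ Set.Ici (0:ℝ) <;> simp [_root_.ext, h]

lemma eqOn_ext_rst (F : ℝ → ℝ) : EqOn (ext (rst F)) F (Set.Ici 0) := by
  intro t ht; rw [ext_apply_mem _ ht]; rfl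

lemma derOn_rst (F : ℝ → ℝ) (hF : Differentiable ℝ F) : derOn (rst F) = rst (deriv F) := by
  funext t
  have h1 : derivWithin (ext (rst F)) (Set.Ici 0) (t:ℝ) = derivWithin F (Set.Ici 0) (t:ℝ) :=
    derivWithin_congr (eqOn_ext_rst F) (eqOn_ext_rst F t.2)
  have h2 : derivWithin F (Set.Ici 0) (t:ℝ) = deriv F (t:ℝ) :=
    (hF (t:ℝ)).derivWithin (uniqueDiffOn_Ici 0 _ t.2)
  show derivWithin (ext (rst F)) (Set.Ici 0) (t:ℝ) = deriv F (t:ℝ)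
  rw [h1, h2]

lemma hasDerivWithinAt_ext {f : ↥(Set.Ici (0:ℝ)) → ℝ}
    (hd : DifferentiableOn ℝ (ext f) (Set.Ici 0)) (t : ↥(Set.Ici (0:ℝ))) :
    HasDerivWithinAt (ext f) (derOn f t) (Set.Ici 0) (t:ℝ) :=
  (hd (t:ℝ) t.2).hasDerivWithinAt

lemma derOn_add {f g : ↥(Set.Ici (0:ℝ)) → ℝ}
    (hf : DifferentiableOn ℝ (ext f) (Set.Ici 0))
    (hg : DifferentiableOn ℝ (ext g) (Set.Ici 0)) :
    derOn (f + g) = derOn f + derOn g := by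
  funext t
  have := ((hasDerivWithinAt_ext hf t).add (hasDerivWithinAt_ext hg t)).derivWithin
    (uniqueDiffOn_Ici 0 _ t.2)
  show derivWithin (ext (f+g)) (Set.Ici 0) (t:ℝ) = _
  rw [ext_add]
  exact this

lemma derOn_smul (r : ℝ) {f : ↥(Set.Ici (0:ℝ)) → ℝ}
    (hf : DifferentiableOn ℝ (ext f) (Set.Ici 0)) :
    derOn (r • f) = r • derOn f := by
  funext t
  have := ((hasDerivWithinAt_ext hf t).const_smul r).derivWithin (uniqueDiffOn_Ici 0 _ t.2)
  show derivWithin (ext (r • f)) (Set.Ici 0) (t:ℝ) = _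
  rw [ext_smul]
  exact this

lemma derOn_zero : derOn (0 : ↥(Set.Ici (0:ℝ)) → ℝ) = 0 := by
  funext t
  have h0 : ext (0 : ↥(Set.Ici (0:ℝ)) → ℝ) = 0 := by
    funext s; by_cases h : s ∈ Set.Ici (0:ℝ) <;> simp [_root_.ext, h]
  show derivWithin (ext 0) (Set.Ici 0) (t:ℝ) = 0
  rw [h0]
  exact (hasDerivWithinAt_const _ _ (0:ℝ)).derivWithin (uniqueDiffOn_Ici 0 _ t.2)

/-! ### derivative of fexp -/

lemma fexp_hasDerivAt (q : ℕ × ℂ) (t : ℝ) :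
    HasDerivAt (fexp q) (q.2 * fexp q t + q.1 * fexp (q.1 - 1, q.2) t) t := by
  obtain ⟨m, l⟩ := q
  have he : HasDerivAt (fun z : ℂ => Complex.exp (l * z)) (l * Complex.exp (l * (t:ℂ))) (t:ℂ) := by
    have h1 : HasDerivAt (fun z : ℂ => l * z) l (t:ℂ) := by
      simpa using (hasDerivAt_id (t:ℂ)).const_mul l
    have h := h1.cexp
    rwa [mul_comm (Complex.exp (l * (t:ℂ))) l] at h
  have hp : HasDerivAt (fun z : ℂ => z ^ m) ((m:ℂ) * (t:ℂ) ^ (m-1)) (t:ℂ) := hasDerivAt_pow m _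
  have h2 := (hp.mul he).comp_ofReal
  have h3 : ((m:ℂ) * (t:ℂ) ^ (m-1) * Complex.exp (l * (t:ℂ)) + (t:ℂ)^m * (l * Complex.exp (l * (t:ℂ))))
      = l * fexp (m, l) t + m * fexp (m - 1, l) t := by
    simp only [fexp]
    ring
  rw [h3] at h2
  exact h2


noncomputable def reQ (q : ℕ × ℂ) : ↥(Set.Ici (0:ℝ)) → ℝ := rst (fun t => (fexp q t).re)
noncomputable def imQ (q : ℕ × ℂ) : ↥(Set.Ici (0:ℝ)) → ℝ := rst (fun t => (fexp q t).im)

lemma fexp_differentiable (q : ℕ × ℂ) : Differentiable ℝ (fexp q) :=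
  fun t => (fexp_hasDerivAt q t).differentiableAt

lemma reF_hasDerivAt {F : ℝ → ℂ} {F' : ℂ} {t : ℝ} (h : HasDerivAt F F' t) :
    HasDerivAt (fun s => (F s).re) F'.re t :=
  Complex.reCLM.hasFDerivAt.comp_hasDerivAt t h

lemma imF_hasDerivAt {F : ℝ → ℂ} {F' : ℂ} {t : ℝ} (h : HasDerivAt F F' t) :
    HasDerivAt (fun s => (F s).im) F'.im t :=
  Complex.imCLM.hasFDerivAt.comp_hasDerivAt t h

lemma derOn_reQ (q : ℕ × ℂ) :
    derOn (reQ q) = q.2.re • reQ q - q.2.im • imQ q + (q.1 : ℝ) • reQ (q.1 - 1, q.2) := by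
  have hdiff : Differentiable ℝ (fun t => (fexp q t).re) :=
    fun t => (reF_hasDerivAt (fexp_hasDerivAt q t)).differentiableAt
  rw [show derOn (reQ q) = derOn (rst (fun t => (fexp q t).re)) from rfl, derOn_rst _ hdiff]
  funext t
  have := (reF_hasDerivAt (fexp_hasDerivAt q (t:ℝ))).deriv
  show deriv (fun t => (fexp q t).re) (t:ℝ) = _
  rw [this]
  show (q.2 * fexp q t + q.1 * fexp (q.1-1, q.2) t).re
      = q.2.re * (fexp q t).re - q.2.im * (fexp q t).im + (q.1:ℝ) * (fexp (q.1-1,q.2) t).re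
  simp [Complex.add_re, Complex.mul_re]

lemma derOn_imQ (q : ℕ × ℂ) :
    derOn (imQ q) = q.2.re • imQ q + q.2.im • reQ q + (q.1 : ℝ) • imQ (q.1 - 1, q.2) := by
  have hdiff : Differentiable ℝ (fun t => (fexp q t).im) :=
    fun t => (imF_hasDerivAt (fexp_hasDerivAt q t)).differentiableAt
  rw [show derOn (imQ q) = derOn (rst (fun t => (fexp q t).im)) from rfl, derOn_rst _ hdiff]
  funext t
  have := (imF_hasDerivAt (fexp_hasDerivAt q (t:ℝ))).deriv
  show deriv (fun t => (fexp q t).im) (t:ℝ) = _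
  rw [this]
  show (q.2 * fexp q t + q.1 * fexp (q.1-1, q.2) t).im
      = q.2.re * (fexp q t).im + q.2.im * (fexp q t).re + (q.1:ℝ) * (fexp (q.1-1,q.2) t).im
  simp [Complex.add_im, Complex.mul_im]

theorem partA (V : Submodule ℝ (↥(Set.Ici (0:ℝ)) → ℝ))
    (hdiff : ∀ f ∈ V, DifferentiableOn ℝ (ext f) (Set.Ici 0))
    (Q : Set (ℕ × ℂ)) (hQ : ExpClosed Q)
    (hspan : Submodule.span ℝ (reimSet Q) = V) : ∀ f ∈ V, derOn f ∈ V := by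
  intro f hf
  have hf' : f ∈ Submodule.span ℝ (reimSet Q) := by rw [hspan]; exact hf
  have hmemV : ∀ q ∈ Q, reQ q ∈ V ∧ imQ q ∈ V := by
    intro q hq
    constructor
    · rw [← hspan]; exact Submodule.subset_span ⟨q, hq, Or.inl rfl⟩
    · rw [← hspan]; exact Submodule.subset_span ⟨q, hq, Or.inr rfl⟩
  induction hf' using Submodule.span_induction with
  | mem g hg =>
      obtain ⟨q, hq, hg⟩ := hg
      have hq' : (q.1 - 1, q.2) ∈ Q := (hQ q hq).2
      rcases hg with hg | hg
      · rw [show g = reQ q from hg, derOn_reQ q]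
        exact V.add_mem (V.sub_mem (V.smul_mem _ (hmemV q hq).1) (V.smul_mem _ (hmemV q hq).2))
          (V.smul_mem _ (hmemV _ hq').1)
      · rw [show g = imQ q from hg, derOn_imQ q]
        exact V.add_mem (V.add_mem (V.smul_mem _ (hmemV q hq).2) (V.smul_mem _ (hmemV q hq).1))
          (V.smul_mem _ (hmemV _ hq').2)
  | zero => rw [derOn_zero]; exact V.zero_mem
  | add x y hx hy ihx ihy =>
      rw [derOn_add (hdiff x (hspan ▸ hx)) (hdiff y (hspan ▸ hy))]
      exact V.add_mem (ihx (hspan ▸ hx)) (ihy (hspan ▸ hy))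
  | smul r x hx ihx =>
      rw [derOn_smul r (hdiff x (hspan ▸ hx))]
      exact V.smul_mem r (ihx (hspan ▸ hx))

/-! ### Complexification -/

noncomputable def extC (h : ↥(Set.Ici (0:ℝ)) → ℂ) : ℝ → ℂ :=
  fun t => if h' : t ∈ Set.Ici (0:ℝ) then h ⟨t, h'⟩ else 0

def rstC (F : ℝ → ℂ) : ↥(Set.Ici (0:ℝ)) → ℂ := fun t => F t

def reP (h : ↥(Set.Ici (0:ℝ)) → ℂ) : ↥(Set.Ici (0:ℝ)) → ℝ := fun t => (h t).re
def imP (h : ↥(Set.Ici (0:ℝ)) → ℂ) : ↥(Set.Ici (0:ℝ)) → ℝ := fun t => (h t).im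

lemma reP_add (h g) : reP (h + g) = reP h + reP g := by funext t; simp [reP]
lemma imP_add (h g) : imP (h + g) = imP h + imP g := by funext t; simp [imP]
lemma reP_smul (c : ℂ) (h) : reP (c • h) = c.re • reP h - c.im • imP h := by
  funext t; simp [reP, imP, Complex.mul_re, mul_comm]
lemma imP_smul (c : ℂ) (h) : imP (c • h) = c.re • imP h + c.im • reP h := by
  funext t; simp [reP, imP, Complex.mul_im, mul_comm]

noncomputable def Wmod (V : Submodule ℝ (↥(Set.Ici (0:ℝ)) → ℝ)) :
    Submodule ℂ (↥(Set.Ici (0:ℝ)) → ℂ) where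
  carrier := {h | reP h ∈ V ∧ imP h ∈ V}
  add_mem' := by
    intro a b ha hb
    exact ⟨by rw [reP_add]; exact V.add_mem ha.1 hb.1, by rw [imP_add]; exact V.add_mem ha.2 hb.2⟩
  zero_mem' := by
    have h1 : reP (0 : ↥(Set.Ici (0:ℝ)) → ℂ) = 0 := by funext t; simp [reP]
    have h2 : imP (0 : ↥(Set.Ici (0:ℝ)) → ℂ) = 0 := by funext t; simp [imP]
    exact ⟨h1 ▸ V.zero_mem, h2 ▸ V.zero_mem⟩
  smul_mem' := by
    intro c h hh
    refine ⟨?_, ?_⟩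
    · rw [reP_smul]; exact V.sub_mem (V.smul_mem _ hh.1) (V.smul_mem _ hh.2)
    · rw [imP_smul]; exact V.add_mem (V.smul_mem _ hh.2) (V.smul_mem _ hh.1)

lemma mem_Wmod {V : Submodule ℝ (↥(Set.Ici (0:ℝ)) → ℝ)} {h} :
    h ∈ Wmod V ↔ reP h ∈ V ∧ imP h ∈ V := Iff.rfl

noncomputable def DcFun (h : ↥(Set.Ici (0:ℝ)) → ℂ) : ↥(Set.Ici (0:ℝ)) → ℂ :=
  fun t => (derOn (reP h) t : ℂ) + Complex.I * (derOn (imP h) t : ℂ)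

lemma extC_eq (h : ↥(Set.Ici (0:ℝ)) → ℂ) :
    extC h = fun s => ((ext (reP h) s : ℝ) : ℂ) + Complex.I * ((ext (imP h) s : ℝ) : ℂ) := by
  funext s
  by_cases hs : s ∈ Set.Ici (0:ℝ)
  · simp only [extC, _root_.ext, dif_pos hs, reP, imP]
    rw [mul_comm, Complex.re_add_im]
  · simp only [extC, _root_.ext, dif_neg hs]
    simp

lemma ofReal_hasDerivWithinAt {f : ℝ → ℝ} {f' : ℝ} {s : Set ℝ} {x : ℝ}
    (h : HasDerivWithinAt f f' s x) :
    HasDerivWithinAt (fun t => ((f t : ℝ) : ℂ)) ((f' : ℝ) : ℂ) s x := by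
  exact h.ofReal_comp

lemma hasDerivWithinAt_extC {V : Submodule ℝ (↥(Set.Ici (0:ℝ)) → ℝ)}
    (hdiff : ∀ f ∈ V, DifferentiableOn ℝ (ext f) (Set.Ici 0))
    {h} (hW : h ∈ Wmod V) (t : ↥(Set.Ici (0:ℝ))) :
    HasDerivWithinAt (extC h) (DcFun h t) (Set.Ici 0) (t:ℝ) := by
  rw [extC_eq]
  exact (ofReal_hasDerivWithinAt (hasDerivWithinAt_ext (hdiff _ hW.1) t)).add
    ((ofReal_hasDerivWithinAt (hasDerivWithinAt_ext (hdiff _ hW.2) t)).const_mul Complex.I)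

lemma DcFun_eq_of_hasDeriv {V : Submodule ℝ (↥(Set.Ici (0:ℝ)) → ℝ)}
    (hdiff : ∀ f ∈ V, DifferentiableOn ℝ (ext f) (Set.Ici 0))
    {h} (hW : h ∈ Wmod V) (g : ↥(Set.Ici (0:ℝ)) → ℂ)
    (hg : ∀ t : ↥(Set.Ici (0:ℝ)), HasDerivWithinAt (extC h) (g t) (Set.Ici 0) (t:ℝ)) :
    DcFun h = g := by
  funext t
  have h1 := (hasDerivWithinAt_extC hdiff hW t).derivWithin (uniqueDiffOn_Ici 0 _ t.2)
  have h2 := (hg t).derivWithin (uniqueDiffOn_Ici 0 _ t.2)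
  rw [← h1, ← h2]

lemma eqOn_extC_rstC (F : ℝ → ℂ) : EqOn (extC (rstC F)) F (Set.Ici 0) := by
  intro t ht; simp only [extC, dif_pos ht]; rfl

lemma DcFun_rstC {V : Submodule ℝ (↥(Set.Ici (0:ℝ)) → ℝ)}
    (hdiff : ∀ f ∈ V, DifferentiableOn ℝ (ext f) (Set.Ici 0))
    {F : ℝ → ℂ} (hF : Differentiable ℝ F) (hW : rstC F ∈ Wmod V) :
    DcFun (rstC F) = rstC (deriv F) := by
  refine DcFun_eq_of_hasDeriv hdiff hW _ (fun t => ?_)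
  exact ((hF (t:ℝ)).hasDerivAt.hasDerivWithinAt).congr
    (fun s hs => (eqOn_extC_rstC F hs)) (eqOn_extC_rstC F t.2)

lemma DcFun_mem {V : Submodule ℝ (↥(Set.Ici (0:ℝ)) → ℝ)}
    (hder : ∀ f ∈ V, derOn f ∈ V) {h} (hW : h ∈ Wmod V) : DcFun h ∈ Wmod V := by
  constructor
  · show reP (DcFun h) ∈ V
    convert hder _ hW.1 using 1
    funext t; simp [reP, DcFun]
  · show imP (DcFun h) ∈ V
    convert hder _ hW.2 using 1
    funext t; simp [imP, DcFun]

lemma derOn_comb {f g : ↥(Set.Ici (0:ℝ)) → ℝ}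
    (hf : DifferentiableOn ℝ (ext f) (Set.Ici 0))
    (hg : DifferentiableOn ℝ (ext g) (Set.Ici 0)) (a b : ℝ) :
    derOn (a • f + b • g) = a • derOn f + b • derOn g := by
  have hf' : DifferentiableOn ℝ (ext (a • f)) (Set.Ici 0) := by
    rw [ext_smul]; exact hf.const_smul a
  have hg' : DifferentiableOn ℝ (ext (b • g)) (Set.Ici 0) := by
    rw [ext_smul]; exact hg.const_smul b
  rw [derOn_add hf' hg', derOn_smul a hf, derOn_smul b hg]

noncomputable def Dc (V : Submodule ℝ (↥(Set.Ici (0:ℝ)) → ℝ))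
    (hdiff : ∀ f ∈ V, DifferentiableOn ℝ (ext f) (Set.Ici 0))
    (hder : ∀ f ∈ V, derOn f ∈ V) : Module.End ℂ ↥(Wmod V) where
  toFun h := ⟨DcFun h.1, DcFun_mem hder h.2⟩
  map_add' := by
    rintro ⟨h, hh⟩ ⟨g, hg⟩
    apply Subtype.ext
    show DcFun (h + g) = DcFun h + DcFun g
    funext t
    simp only [DcFun, reP_add, imP_add, derOn_add (hdiff _ hh.1) (hdiff _ hg.1),
      derOn_add (hdiff _ hh.2) (hdiff _ hg.2), Pi.add_apply]
    push_cast
    ring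
  map_smul' := by
    rintro c ⟨h, hh⟩
    apply Subtype.ext
    show DcFun (c • h) = c • DcFun h
    funext t
    have hre : derOn (reP (c • h)) = c.re • derOn (reP h) + (-c.im) • derOn (imP h) := by
      rw [reP_smul, sub_eq_add_neg, ← neg_smul,
        derOn_comb (hdiff _ hh.1) (hdiff _ hh.2) c.re (-c.im)]
    have him : derOn (imP (c • h)) = c.re • derOn (imP h) + c.im • derOn (reP h) := by
      rw [imP_smul, derOn_comb (hdiff _ hh.2) (hdiff _ hh.1) c.re c.im]
    show (derOn (reP (c • h)) t : ℂ) + Complex.I * (derOn (imP (c • h)) t : ℂ)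
        = c * ((derOn (reP h) t : ℂ) + Complex.I * (derOn (imP h) t : ℂ))
    rw [hre, him]
    simp only [Pi.add_apply, Pi.smul_apply, smul_eq_mul]
    push_cast
    linear_combination (((derOn (reP h) t : ℂ) + Complex.I * (derOn (imP h) t : ℂ)) *
        (Complex.re_add_im c)) - ((c.im : ℂ) * (derOn (imP h) t : ℂ)) * Complex.I_mul_I
  
lemma Wmod_finite (V : Submodule ℝ (↥(Set.Ici (0:ℝ)) → ℝ)) (hfin : FiniteDimensional ℝ ↥V) :
    FiniteDimensional ℂ ↥(Wmod V) := by
  let L : (↥V × ↥V) →ₗ[ℝ] ↥(Wmod V) :=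
    { toFun := fun p => ⟨fun t => ((p.1.1 t : ℝ) : ℂ) + Complex.I * ((p.2.1 t : ℝ) : ℂ),
        by
          constructor
          · show reP _ ∈ V
            convert p.1.2 using 1
            funext t; simp [reP]
          · show imP _ ∈ V
            convert p.2.2 using 1
            funext t; simp [imP]⟩
      map_add' := by
        rintro p q
        apply Subtype.ext
        funext t
        simp only [Prod.fst_add, Prod.snd_add, Submodule.coe_add, Pi.add_apply]
        push_cast
        ring
      map_smul' := by
        rintro r p
        apply Subtype.ext
        funext t
        simp only [Prod.smul_fst, Prod.smul_snd, Submodule.coe_smul, Pi.smul_apply,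
          RingHom.id_apply, SetLike.mk_smul_mk, smul_eq_mul, Complex.real_smul]
        push_cast
        rw [Pi.smul_apply, Complex.real_smul]
        push_cast
        ring }
  have hsurj : Function.Surjective L := by
    rintro ⟨h, hh⟩
    refine ⟨(⟨reP h, hh.1⟩, ⟨imP h, hh.2⟩), ?_⟩
    apply Subtype.ext
    funext t
    show ((h t).re : ℂ) + Complex.I * ((h t).im : ℂ) = h t
    rw [mul_comm, Complex.re_add_im]
  have : Module.Finite ℝ ↥(Wmod V) := Module.Finite.of_surjective L hsurj
  exact Module.Finite.of_restrictScalars_finite ℝ ℂ ↥(Wmod V)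

lemma hasDerivAt_cexp_mul (l : ℂ) (t : ℝ) :
    HasDerivAt (fun s : ℝ => Complex.exp (l * s)) (l * Complex.exp (l * t)) t := by
  have h1 : HasDerivAt (fun z : ℂ => l * z) l (t:ℂ) := by
    simpa using (hasDerivAt_id (t:ℂ)).const_mul l
  simpa [mul_comm] using ((Complex.hasDerivAt_exp (l * (t:ℂ))).comp (t:ℂ) h1).comp_ofReal

lemma hasDerivAt_polyFun (c : ℕ → ℂ) (k : ℕ) (t : ℝ) :
    HasDerivAt (fun s : ℝ => ∑ m ∈ Finset.range k, c m / (m+1) * (s:ℂ)^(m+1))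
      (∑ m ∈ Finset.range k, c m * (t:ℂ)^m) t := by
  have h : ∀ m ∈ Finset.range k,
      HasDerivAt (fun s : ℝ => c m / (m+1) * (s:ℂ)^(m+1)) (c m * (t:ℂ)^m) t := by
    intro m _
    have h1 := ((hasDerivAt_pow (m+1) (t:ℂ)).comp_ofReal).const_mul (c m / (m+1))
    have hne : ((m:ℂ)+1) ≠ 0 := Nat.cast_add_one_ne_zero m
    have h2 : c m / ((m:ℂ)+1) * (((m:ℂ)+1) * (t:ℂ)^m) = c m * (t:ℂ)^m := by
      field_simp
    simpa [h2] using h1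
  simpa using HasDerivAt.fun_sum h

lemma claimA (V : Submodule ℝ (↥(Set.Ici (0:ℝ)) → ℝ))
    (hdiff : ∀ f ∈ V, DifferentiableOn ℝ (ext f) (Set.Ici 0))
    (hder : ∀ f ∈ V, derOn f ∈ V) (μ : ℂ) :
    ∀ (k : ℕ) (w : ↥(Wmod V)), (((Dc V hdiff hder) - μ • 1) ^ k) w = 0 →
      ∃ c : ℕ → ℂ, ∀ t : ↥(Set.Ici (0:ℝ)),
        (w : ↥(Set.Ici (0:ℝ)) → ℂ) t
          = Complex.exp (μ * t) * ∑ m ∈ Finset.range k, c m * (t:ℂ)^m := by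
  intro k
  induction k with
  | zero =>
      intro w hw
      rw [pow_zero] at hw
      refine ⟨fun _ => 0, fun t => ?_⟩
      have : w = 0 := by simpa using hw
      rw [this]
      simp
  | succ k ih =>
      intro w hw
      set N := (Dc V hdiff hder) - μ • 1 with hN
      have hw2 : (N ^ k) (N w) = 0 := by
        rw [← Module.End.mul_apply, ← pow_succ]
        exact hw
      obtain ⟨c, hc⟩ := ih (N w) hw2
      have hval : ∀ t : ↥(Set.Ici (0:ℝ)),
          ((N w : ↥(Wmod V)) : ↥(Set.Ici (0:ℝ)) → ℂ) t = DcFun (w : ↥(Set.Ici (0:ℝ)) → ℂ) t - μ * (w : ↥(Set.Ici (0:ℝ)) → ℂ) t := by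
        intro t
        simp only [hN, LinearMap.sub_apply, LinearMap.smul_apply, Module.End.one_apply]
        rfl
      -- the function G
      set G : ℝ → ℂ := fun s => extC (w : ↥(Set.Ici (0:ℝ)) → ℂ) s * Complex.exp (-μ * s) with hG
      have hGder : ∀ t ∈ Set.Ici (0:ℝ),
          HasDerivWithinAt G
            (∑ m ∈ Finset.range k, c m * (t:ℂ)^m) (Set.Ici 0) t := by
        intro t ht
        have h1 := hasDerivWithinAt_extC hdiff w.2 ⟨t, ht⟩
        have h2 := (hasDerivAt_cexp_mul (-μ) t).hasDerivWithinAt (s := Set.Ici 0)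
        have h3 := h1.mul h2
        have heq : DcFun (w : ↥(Set.Ici (0:ℝ)) → ℂ) ⟨t, ht⟩ * Complex.exp (-μ * t)
            + extC (w : ↥(Set.Ici (0:ℝ)) → ℂ) t * (-μ * Complex.exp (-μ * t))
            = ∑ m ∈ Finset.range k, c m * (t:ℂ)^m := by
          have hext : extC (w : ↥(Set.Ici (0:ℝ)) → ℂ) t = (w : ↥(Set.Ici (0:ℝ)) → ℂ) ⟨t, ht⟩ := dif_pos ht
          have := hc ⟨t, ht⟩
          rw [hval ⟨t, ht⟩] at this
          have hDc : DcFun (w : ↥(Set.Ici (0:ℝ)) → ℂ) ⟨t, ht⟩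
              = Complex.exp (μ * t) * ∑ m ∈ Finset.range k, c m * (t:ℂ)^m
                + μ * (w : ↥(Set.Ici (0:ℝ)) → ℂ) ⟨t, ht⟩ := by
            rw [← this]; ring
          rw [hDc, hext]
          have hcancel : Complex.exp (μ * t) * Complex.exp (-μ * t) = 1 := by
            rw [← Complex.exp_add]; ring_nf; exact Complex.exp_zero
          calc (Complex.exp (μ * t) * ∑ m ∈ Finset.range k, c m * (t:ℂ)^m
                + μ * (w : ↥(Set.Ici (0:ℝ)) → ℂ) ⟨t, ht⟩) * Complex.exp (-μ * t)
              + (w : ↥(Set.Ici (0:ℝ)) → ℂ) ⟨t, ht⟩ * (-μ * Complex.exp (-μ * t))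
              = (Complex.exp (μ * t) * Complex.exp (-μ * t))
                  * ∑ m ∈ Finset.range k, c m * (t:ℂ)^m := by ring
            _ = ∑ m ∈ Finset.range k, c m * (t:ℂ)^m := by rw [hcancel]; ring
        rw [← heq]
        exact h3
      -- subtract the antiderivative polynomial
      set PH : ℝ → ℂ := fun s => ∑ m ∈ Finset.range k, c m / (m+1) * (s:ℂ)^(m+1) with hPH
      have hHder : ∀ t ∈ Set.Ici (0:ℝ),
          HasDerivWithinAt (fun s => G s - PH s) ((fun _ => (0:ℂ)) t) (Set.Ici 0) t := by
        intro t ht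
        simpa using (hGder t ht).fun_sub (hasDerivAt_polyFun c k t).hasDerivWithinAt
      have hconst : ∀ t ∈ Set.Ici (0:ℝ), G t - PH t = G 0 - PH 0 := by
        intro t ht
        have := Convex.norm_image_sub_le_of_norm_hasDerivWithin_le
          (f := fun s => G s - PH s) (f' := fun _ => (0:ℂ)) (C := 0)
          hHder (fun x _ => by simp) (convex_Ici 0) (self_mem_Ici) ht
        rw [zero_mul] at this
        have h0 := le_antisymm this (norm_nonneg _)
        rwa [norm_eq_zero, sub_eq_zero] at h0
      -- conclude
      have hPH0 : PH 0 = 0 := by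
        simp [hPH]
      have hG0 : G 0 = (w : ↥(Set.Ici (0:ℝ)) → ℂ) ⟨0, self_mem_Ici⟩ := by
        have hext : extC (w : ↥(Set.Ici (0:ℝ)) → ℂ) (0:ℝ) = (w : ↥(Set.Ici (0:ℝ)) → ℂ) ⟨0, self_mem_Ici⟩ := dif_pos self_mem_Ici
        simp [hG, hext]
      refine ⟨fun j => if j = 0 then (w : ↥(Set.Ici (0:ℝ)) → ℂ) ⟨0, self_mem_Ici⟩ else c (j-1) / j, fun t => ?_⟩
      have hGt := hconst (t:ℝ) t.2
      rw [hPH0, hG0, sub_zero] at hGt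
      have hwt : (w : ↥(Set.Ici (0:ℝ)) → ℂ) t = Complex.exp (μ * t) * (PH t + (w : ↥(Set.Ici (0:ℝ)) → ℂ) ⟨0, self_mem_Ici⟩) := by
        have hext : extC (w : ↥(Set.Ici (0:ℝ)) → ℂ) (t:ℝ) = (w : ↥(Set.Ici (0:ℝ)) → ℂ) t :=
          dif_pos t.2
        have hcancel : Complex.exp (μ * t) * Complex.exp (-μ * t) = 1 := by
          rw [← Complex.exp_add]; ring_nf; exact Complex.exp_zero
        have : G (t:ℝ) = (w : ↥(Set.Ici (0:ℝ)) → ℂ) t * Complex.exp (-μ * t) := by simp only [hG]; rw [hext]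
        rw [this] at hGt
        rw [sub_eq_iff_eq_add] at hGt
        calc (w : ↥(Set.Ici (0:ℝ)) → ℂ) t = ((w : ↥(Set.Ici (0:ℝ)) → ℂ) t * Complex.exp (-μ * t)) * Complex.exp (μ * t)
              + (1 - Complex.exp (μ * t) * Complex.exp (-μ * t)) * (w : ↥(Set.Ici (0:ℝ)) → ℂ) t := by ring
          _ = Complex.exp (μ * t) * (PH t + (w : ↥(Set.Ici (0:ℝ)) → ℂ) ⟨0, self_mem_Ici⟩) := by
              rw [hGt, hcancel]
              ring
      rw [hwt]
      congr 1
      rw [Finset.sum_range_succ']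
      simp only [pow_zero, mul_one, if_pos rfl]
      rw [hPH]
      congr 1
      apply Finset.sum_congr rfl
      intro i _
      simp [Nat.succ_ne_zero]

lemma polyPart_hasDerivAt (c : ℕ → ℂ) (k : ℕ) (t : ℝ) :
    HasDerivAt (fun s : ℝ => ∑ m ∈ Finset.range k, c m * (s:ℂ)^m)
      (∑ m ∈ Finset.range k, c m * m * (t:ℂ)^(m-1)) t := by
  have h : ∀ m ∈ Finset.range k,
      HasDerivAt (fun s : ℝ => c m * (s:ℂ)^m) (c m * m * (t:ℂ)^(m-1)) t := by
    intro m _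
    have h1 := ((hasDerivAt_pow m (t:ℂ)).comp_ofReal).const_mul (c m)
    simpa [mul_assoc] using h1
  simpa using HasDerivAt.fun_sum h

lemma expPoly_hasDerivAt (μ : ℂ) (c : ℕ → ℂ) (k : ℕ) (t : ℝ) :
    HasDerivAt (fun s : ℝ => Complex.exp (μ * s) * ∑ m ∈ Finset.range k, c m * (s:ℂ)^m)
      (Complex.exp (μ * t) *
        (μ * (∑ m ∈ Finset.range k, c m * (t:ℂ)^m)
          + ∑ m ∈ Finset.range k, c m * m * (t:ℂ)^(m-1))) t := by
  have h := (hasDerivAt_cexp_mul μ t).fun_mul (polyPart_hasDerivAt c k t)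
  exact h.congr_deriv (by ring)

lemma sum_shift (c : ℕ → ℂ) (d : ℕ) (z : ℂ) :
    ∑ m ∈ Finset.range (d+2), c m * m * z^(m-1)
      = ∑ j ∈ Finset.range (d+1), ((j:ℂ)+1) * c (j+1) * z^j := by
  rw [Finset.sum_range_succ']
  simp only [Nat.cast_zero, mul_zero, zero_mul, add_zero, Nat.add_sub_cancel]
  apply Finset.sum_congr rfl
  intro i _
  push_cast
  ring

lemma mem_expSet_iff_rstC_mem {V : Submodule ℝ (↥(Set.Ici (0:ℝ)) → ℝ)} (q : ℕ × ℂ) :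
    q ∈ expSet V ↔ rstC (fexp q) ∈ Wmod V := Iff.rfl

lemma claimB2 (V : Submodule ℝ (↥(Set.Ici (0:ℝ)) → ℝ))
    (hdiff : ∀ f ∈ V, DifferentiableOn ℝ (ext f) (Set.Ici 0))
    (hder : ∀ f ∈ V, derOn f ∈ V) (μ : ℂ) :
    ∀ (d : ℕ) (c : ℕ → ℂ) (h : ↥(Set.Ici (0:ℝ)) → ℂ), h ∈ Wmod V →
      (∀ t : ↥(Set.Ici (0:ℝ)),
        h t = Complex.exp (μ * t) * ∑ m ∈ Finset.range (d+1), c m * (t:ℂ)^m) →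
      c d ≠ 0 → ∀ m ≤ d, rstC (fexp (m, μ)) ∈ Wmod V := by
  intro d
  induction d with
  | zero =>
      intro c h hW hrep hc0 m hm
      interval_cases m
      have : rstC (fexp (0, μ)) = (c 0)⁻¹ • h := by
        funext t
        simp only [Pi.smul_apply, smul_eq_mul]
        rw [hrep t]
        rw [show rstC (fexp (0, μ)) t = Complex.exp (μ * t) by simp [rstC, fexp]]
        rw [Finset.sum_range_one]
        field_simp
      rw [this]
      exact (Wmod V).smul_mem _ hW
  | succ d ih =>
      intro c h hW hrep hcd
      -- h = rstC F with F globally differentiable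
      set F : ℝ → ℂ :=
        fun s => Complex.exp (μ * s) * ∑ m ∈ Finset.range (d+2), c m * (s:ℂ)^m with hF
      have hhF : h = rstC F := by
        funext t; rw [hrep t]; rfl
      have hFdiff : Differentiable ℝ F :=
        fun t => (expPoly_hasDerivAt μ c (d+2) t).differentiableAt
      have hDc : DcFun h = rstC (deriv F) := by
        rw [hhF]; exact DcFun_rstC hdiff hFdiff (hhF ▸ hW)
      -- the function h2 = Dc h - μ h
      set c2 : ℕ → ℂ := fun j => ((j:ℂ)+1) * c (j+1) with hc2
      set h2 : ↥(Set.Ici (0:ℝ)) → ℂ := DcFun h - μ • h with hh2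
      have hW2 : h2 ∈ Wmod V := (Wmod V).sub_mem (DcFun_mem hder hW) ((Wmod V).smul_mem μ hW)
      have hrep2 : ∀ t : ↥(Set.Ici (0:ℝ)),
          h2 t = Complex.exp (μ * t) * ∑ m ∈ Finset.range (d+1), c2 m * (t:ℂ)^m := by
        intro t
        have hderiv : deriv F (t:ℝ)
            = Complex.exp (μ * t) *
              (μ * (∑ m ∈ Finset.range (d+2), c m * (t:ℂ)^m)
               + ∑ m ∈ Finset.range (d+2), c m * m * (t:ℂ)^(m-1)) :=
          (expPoly_hasDerivAt μ c (d+2) (t:ℝ)).deriv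
        show DcFun h t - μ * h t = _
        rw [hDc]
        show deriv F (t:ℝ) - μ * h t = _
        rw [hderiv, hrep t, sum_shift c d]
        ring
      have hcd2 : c2 d ≠ 0 := mul_ne_zero (Nat.cast_add_one_ne_zero d) hcd
      have hlow : ∀ m ≤ d, rstC (fexp (m, μ)) ∈ Wmod V := ih c2 h2 hW2 hrep2 hcd2
      -- now get the top one
      have htop : rstC (fexp (d+1, μ)) ∈ Wmod V := by
        have hsub : rstC (fexp (d+1, μ))
            = (c (d+1))⁻¹ •
              (h - ∑ m ∈ Finset.range (d+1), c m • rstC (fexp (m, μ))) := by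
          funext t
          simp only [Pi.smul_apply, Pi.sub_apply, Finset.sum_apply, Pi.smul_apply,
            smul_eq_mul]
          rw [hrep t, Finset.sum_range_succ]
          have h5 : ∑ m ∈ Finset.range (d+1), c m * rstC (fexp (m, μ)) t
              = (∑ m ∈ Finset.range (d+1), c m * (t:ℂ)^m) * Complex.exp (μ * t) := by
            rw [Finset.sum_mul]
            apply Finset.sum_congr rfl
            intro m _
            show c m * ((t:ℂ)^m * Complex.exp (μ * t)) = _
            ring
          rw [h5]
          rw [show rstC (fexp (d+1, μ)) t = (t:ℂ)^(d+1) * Complex.exp (μ * t) from rfl]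
          field_simp
          ring
        rw [hsub]
        refine (Wmod V).smul_mem _ ((Wmod V).sub_mem hW (Submodule.sum_mem _ ?_))
        intro m hm
        exact (Wmod V).smul_mem _ (hlow m (Nat.lt_succ_iff.mp (Finset.mem_range.mp hm)))
      intro m hm
      rcases Nat.lt_succ_iff_lt_or_eq.mp (Nat.lt_succ_of_le hm) with hm' | hm'
      · exact hlow m (Nat.lt_succ_iff.mp hm')
      · rw [hm']; exact htop

noncomputable def Sspan (V : Submodule ℝ (↥(Set.Ici (0:ℝ)) → ℝ)) :
    Submodule ℂ (↥(Set.Ici (0:ℝ)) → ℂ) :=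
  Submodule.span ℂ {g | ∃ q ∈ expSet V, g = rstC (fexp q)}

lemma claimB (V : Submodule ℝ (↥(Set.Ici (0:ℝ)) → ℝ))
    (hdiff : ∀ f ∈ V, DifferentiableOn ℝ (ext f) (Set.Ici 0))
    (hder : ∀ f ∈ V, derOn f ∈ V) (μ : ℂ) :
    ∀ (d : ℕ) (c : ℕ → ℂ) (h : ↥(Set.Ici (0:ℝ)) → ℂ), h ∈ Wmod V →
      (∀ t : ↥(Set.Ici (0:ℝ)),
        h t = Complex.exp (μ * t) * ∑ m ∈ Finset.range d, c m * (t:ℂ)^m) →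
      h ∈ Sspan V := by
  intro d
  induction d with
  | zero =>
      intro c h _ hrep
      have : h = 0 := by
        funext t; rw [hrep t]; simp
      rw [this]
      exact Submodule.zero_mem _
  | succ d ih =>
      intro c h hW hrep
      by_cases hc : c d = 0
      · refine ih c h hW (fun t => ?_)
        rw [hrep t, Finset.sum_range_succ, hc]
        simp
      · have hall := claimB2 V hdiff hder μ d c h hW hrep hc
        have hsum : h = ∑ m ∈ Finset.range (d+1), c m • rstC (fexp (m, μ)) := by
          funext t
          rw [hrep t]
          simp only [Finset.sum_apply, Pi.smul_apply, smul_eq_mul]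
          rw [Finset.mul_sum]
          apply Finset.sum_congr rfl
          intro m _
          show Complex.exp (μ * t) * (c m * (t:ℂ)^m) = c m * ((t:ℂ)^m * Complex.exp (μ * t))
          ring
        rw [hsum]
        apply Submodule.sum_mem
        intro m hm
        exact Submodule.smul_mem _ _ (Submodule.subset_span
          ⟨(m, μ), hall m (Nat.lt_succ_iff.mp (Finset.mem_range.mp hm)), rfl⟩)

lemma W_le_Sspan (V : Submodule ℝ (↥(Set.Ici (0:ℝ)) → ℝ)) (hfin : FiniteDimensional ℝ ↥V)
    (hdiff : ∀ f ∈ V, DifferentiableOn ℝ (ext f) (Set.Ici 0))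
    (hder : ∀ f ∈ V, derOn f ∈ V) :
    ∀ h ∈ Wmod V, h ∈ Sspan V := by
  haveI := Wmod_finite V hfin
  intro h hW
  have htop := Module.End.iSup_maxGenEigenspace_eq_top (Dc V hdiff hder)
  have hw : (⟨h, hW⟩ : ↥(Wmod V)) ∈ ⨆ μ, (Dc V hdiff hder).maxGenEigenspace μ := by
    rw [htop]; exact Submodule.mem_top
  have hind : ∀ w : ↥(Wmod V), w ∈ ⨆ μ, (Dc V hdiff hder).maxGenEigenspace μ →
      (w : ↥(Set.Ici (0:ℝ)) → ℂ) ∈ Sspan V := by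
    intro w hw
    refine Submodule.iSup_induction (motive := fun w : ↥(Wmod V) =>
      (w : ↥(Set.Ici (0:ℝ)) → ℂ) ∈ Sspan V) _ hw ?_ ?_ ?_
    · intro μ x hx
      rw [Module.End.mem_maxGenEigenspace] at hx
      obtain ⟨k, hk⟩ := hx
      obtain ⟨c, hc⟩ := claimA V hdiff hder μ k x hk
      exact claimB V hdiff hder μ k c (x : ↥(Set.Ici (0:ℝ)) → ℂ) x.2 hc
    · exact Submodule.zero_mem _
    · intro x y hx hy
      exact Submodule.add_mem _ hx hy
  exact hind ⟨h, hW⟩ hw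

lemma reim_span_eq (V : Submodule ℝ (↥(Set.Ici (0:ℝ)) → ℝ)) (hfin : FiniteDimensional ℝ ↥V)
    (hdiff : ∀ f ∈ V, DifferentiableOn ℝ (ext f) (Set.Ici 0))
    (hder : ∀ f ∈ V, derOn f ∈ V) :
    Submodule.span ℝ (reimSet (expSet V)) = V := by
  apply le_antisymm
  · rw [Submodule.span_le]
    rintro g ⟨q, hq, hg | hg⟩
    · rw [hg]; exact hq.1
    · rw [hg]; exact hq.2
  · intro f hf
    set hC : ↥(Set.Ici (0:ℝ)) → ℂ := fun t => ((f t : ℝ) : ℂ) with hCdef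
    have hWf : hC ∈ Wmod V := by
      constructor
      · show reP hC ∈ V
        have h1 : reP hC = f := by funext t; simp [reP, hCdef]
        rw [h1]; exact hf
      · show imP hC ∈ V
        have h1 : imP hC = 0 := by funext t; simp [imP, hCdef]
        rw [h1]; exact V.zero_mem
    have hS := W_le_Sspan V hfin hdiff hder hC hWf
    have key : ∀ h, h ∈ Sspan V →
        reP h ∈ Submodule.span ℝ (reimSet (expSet V)) ∧
        imP h ∈ Submodule.span ℝ (reimSet (expSet V)) := by
      intro h hh
      induction hh using Submodule.span_induction with
      | mem g hg =>
          obtain ⟨q, hq, rfl⟩ := hg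
          exact ⟨Submodule.subset_span ⟨q, hq, Or.inl rfl⟩,
            Submodule.subset_span ⟨q, hq, Or.inr rfl⟩⟩
      | zero =>
          have h1 : reP (0 : ↥(Set.Ici (0:ℝ)) → ℂ) = 0 := by funext t; simp [reP]
          have h2 : imP (0 : ↥(Set.Ici (0:ℝ)) → ℂ) = 0 := by funext t; simp [imP]
          exact ⟨h1 ▸ Submodule.zero_mem _, h2 ▸ Submodule.zero_mem _⟩
      | add x y hx hy ihx ihy =>
          exact ⟨by rw [reP_add]; exact Submodule.add_mem _ ihx.1 ihy.1,
            by rw [imP_add]; exact Submodule.add_mem _ ihx.2 ihy.2⟩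
      | smul c x hx ihx =>
          constructor
          · rw [reP_smul]
            exact Submodule.sub_mem _ (Submodule.smul_mem _ _ ihx.1)
              (Submodule.smul_mem _ _ ihx.2)
          · rw [imP_smul]
            exact Submodule.add_mem _ (Submodule.smul_mem _ _ ihx.2)
              (Submodule.smul_mem _ _ ihx.1)
    have hre := (key hC hS).1
    have hfeq : f = reP hC := by funext t; simp [reP, hCdef]
    rw [hfeq]
    exact hre

lemma conj_fexp (q : ℕ × ℂ) (t : ℝ) :
    fexp (q.1, (starRingEnd ℂ) q.2) t = (starRingEnd ℂ) (fexp q t) := by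
  simp only [fexp, map_mul, map_pow, Complex.conj_ofReal]
  rw [← Complex.exp_conj, map_mul, Complex.conj_ofReal]

lemma expClosed_expSet (V : Submodule ℝ (↥(Set.Ici (0:ℝ)) → ℝ))
    (hder : ∀ f ∈ V, derOn f ∈ V) : ExpClosed (expSet V) := by
  intro q hq
  constructor
  · constructor
    · show rst (fun t => (fexp (q.1, (starRingEnd ℂ) q.2) t).re) ∈ V
      convert hq.1 using 1
      funext t
      simp only [rst, conj_fexp, Complex.conj_re]
    · show rst (fun t => (fexp (q.1, (starRingEnd ℂ) q.2) t).im) ∈ V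
      have heq : rst (fun t => (fexp (q.1, (starRingEnd ℂ) q.2) t).im)
          = (-1 : ℝ) • rst (fun t => (fexp q t).im) := by
        funext t
        simp only [rst, conj_fexp, Complex.conj_im, Pi.smul_apply, smul_eq_mul]
        ring
      rw [heq]
      exact V.smul_mem _ hq.2
  · rcases Nat.eq_zero_or_pos q.1 with h0 | hpos
    · have heq : ((q.1 - 1 : ℕ), q.2) = q := by
        rw [show q = (q.1, q.2) from rfl]
        simp [h0]
      rw [heq]
      exact hq
    · have hne : ((q.1 : ℝ)) ≠ 0 := Nat.cast_ne_zero.mpr (Nat.pos_iff_ne_zero.mp hpos)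
      constructor
      · show reQ (q.1 - 1, q.2) ∈ V
        have hre := hder _ hq.1
        rw [show derOn (rst fun t => (fexp q t).re) = derOn (reQ q) from rfl, derOn_reQ q] at hre
        have hmem : ((q.1 : ℝ)) • reQ (q.1 - 1, q.2) ∈ V := by
          have h2 := V.sub_mem hre
            (V.sub_mem (V.smul_mem q.2.re (show reQ q ∈ V from hq.1)) (V.smul_mem q.2.im (show imQ q ∈ V from hq.2)))
          convert h2 using 1
          abel
        have : reQ (q.1 - 1, q.2) = (q.1 : ℝ)⁻¹ • (((q.1 : ℝ)) • reQ (q.1 - 1, q.2)) := by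
          rw [smul_smul, inv_mul_cancel₀ hne, one_smul]
        rw [this]
        exact V.smul_mem _ hmem
      · show imQ (q.1 - 1, q.2) ∈ V
        have him := hder _ hq.2
        rw [show derOn (rst fun t => (fexp q t).im) = derOn (imQ q) from rfl, derOn_imQ q] at him
        have hmem : ((q.1 : ℝ)) • imQ (q.1 - 1, q.2) ∈ V := by
          have h2 := V.sub_mem him
            (V.add_mem (V.smul_mem q.2.re (show imQ q ∈ V from hq.2)) (V.smul_mem q.2.im (show reQ q ∈ V from hq.1)))
          convert h2 using 1
          abel
        have : imQ (q.1 - 1, q.2) = (q.1 : ℝ)⁻¹ • (((q.1 : ℝ)) • imQ (q.1 - 1, q.2)) := by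
          rw [smul_smul, inv_mul_cancel₀ hne, one_smul]
        rw [this]
        exact V.smul_mem _ hmem

lemma Dc_fexp (V : Submodule ℝ (↥(Set.Ici (0:ℝ)) → ℝ))
    (hdiff : ∀ f ∈ V, DifferentiableOn ℝ (ext f) (Set.Ici 0))
    (hder : ∀ f ∈ V, derOn f ∈ V)
    (m : ℕ) (μ : ℂ) (hq : (m, μ) ∈ expSet V) (hq' : (m - 1, μ) ∈ expSet V) :
    (Dc V hdiff hder - μ • 1) ⟨rstC (fexp (m, μ)), (mem_expSet_iff_rstC_mem _).mp hq⟩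
      = ((m : ℂ)) • (⟨rstC (fexp (m - 1, μ)), (mem_expSet_iff_rstC_mem _).mp hq'⟩ : ↥(Wmod V)) := by
  apply Subtype.ext
  show DcFun (rstC (fexp (m, μ))) - μ • rstC (fexp (m, μ)) = (m : ℂ) • rstC (fexp (m - 1, μ))
  rw [DcFun_rstC hdiff (fexp_differentiable _) ((mem_expSet_iff_rstC_mem _).mp hq)]
  funext t
  have hd := (fexp_hasDerivAt (m, μ) (t:ℝ)).deriv
  simp only [Pi.sub_apply, Pi.smul_apply, smul_eq_mul]
  rw [show rstC (deriv (fexp (m, μ))) t = deriv (fexp (m, μ)) (t:ℝ) from rfl, hd]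
  show μ * fexp (m, μ) t + (m:ℂ) * fexp (m - 1, μ) t - μ * fexp (m, μ) t
      = (m:ℂ) * fexp (m - 1, μ) t
  ring

lemma gen_steps (V : Submodule ℝ (↥(Set.Ici (0:ℝ)) → ℝ))
    (hdiff : ∀ f ∈ V, DifferentiableOn ℝ (ext f) (Set.Ici 0))
    (hder : ∀ f ∈ V, derOn f ∈ V) :
    ∀ (m : ℕ) (μ : ℂ) (hq : (m, μ) ∈ expSet V),
      (((Dc V hdiff hder - μ • 1) ^ (m+1))
          ⟨rstC (fexp (m, μ)), (mem_expSet_iff_rstC_mem _).mp hq⟩ = 0) ∧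
      (((Dc V hdiff hder - μ • 1) ^ m)
          ⟨rstC (fexp (m, μ)), (mem_expSet_iff_rstC_mem _).mp hq⟩ ≠ 0) := by
  intro m
  induction m with
  | zero =>
      intro μ hq
      constructor
      · rw [pow_one, Dc_fexp V hdiff hder 0 μ hq hq]
        simp
      · rw [pow_zero, Module.End.one_apply]
        intro h0
        have := congrFun (congrArg Subtype.val h0) ⟨0, self_mem_Ici⟩
        simp only [rstC, fexp, ZeroMemClass.coe_zero, Pi.zero_apply] at this
        rw [Complex.ofReal_zero, mul_zero, Complex.exp_zero, pow_zero, one_mul] at this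
        exact one_ne_zero this
  | succ m ih =>
      intro μ hq
      have hq' : (m, μ) ∈ expSet V := by
        have h := (expClosed_expSet V hder _ hq).2
        simpa using h
      obtain ⟨h1, h2⟩ := ih μ hq'
      have hstep : (Dc V hdiff hder - μ • 1)
            ⟨rstC (fexp (m+1, μ)), (mem_expSet_iff_rstC_mem _).mp hq⟩
          = (((m+1 : ℕ)) : ℂ) •
            (⟨rstC (fexp (m, μ)), (mem_expSet_iff_rstC_mem _).mp hq'⟩ : ↥(Wmod V)) := by
        have := Dc_fexp V hdiff hder (m+1) μ hq (by simpa using hq')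
        simpa using this
      constructor
      · rw [pow_succ, Module.End.mul_apply, hstep, map_smul, h1, smul_zero]
      · rw [pow_succ, Module.End.mul_apply, hstep, map_smul]
        exact smul_ne_zero (Nat.cast_ne_zero.mpr (Nat.succ_ne_zero m)) h2

lemma expSet_finite (V : Submodule ℝ (↥(Set.Ici (0:ℝ)) → ℝ)) (hfin : FiniteDimensional ℝ ↥V)
    (hdiff : ∀ f ∈ V, DifferentiableOn ℝ (ext f) (Set.Ici 0))
    (hder : ∀ f ∈ V, derOn f ∈ V) : (expSet V).Finite := by
  haveI := Wmod_finite V hfin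
  set D := Dc V hdiff hder with hD
  apply Set.Finite.subset
    (Set.Finite.prod (Set.finite_Iio (Module.finrank ℂ ↥(Wmod V)))
      (Module.End.finite_hasEigenvalue D))
  rintro ⟨m, μ⟩ hq
  obtain ⟨h1, h2⟩ := gen_steps V hdiff hder m μ hq
  set w : ↥(Wmod V) := ⟨rstC (fexp (m, μ)), (mem_expSet_iff_rstC_mem _).mp hq⟩ with hw
  have hwmem : w ∈ D.genEigenspace μ (((m+1 : ℕ)) : ℕ∞) :=
    Module.End.mem_genEigenspace_nat.mpr h1
  constructor
  · show m ∈ Set.Iio (Module.finrank ℂ ↥(Wmod V))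
    by_contra hc
    have hle : Module.finrank ℂ ↥(Wmod V) ≤ m := not_lt.mp hc
    have e1 := Module.End.genEigenspace_eq_genEigenspace_finrank_of_le D μ
      (k := m+1) (le_trans hle (Nat.le_succ m))
    have e2 := Module.End.genEigenspace_eq_genEigenspace_finrank_of_le D μ (k := m) hle
    rw [e1, ← e2] at hwmem
    exact h2 (Module.End.mem_genEigenspace_nat.mp hwmem)
  · show D.HasEigenvalue μ
    apply Module.End.hasEigenvalue_of_hasGenEigenvalue (k := m+1)
    refine Submodule.ne_bot_iff _ |>.mpr ⟨w, hwmem, ?_⟩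
    intro h0
    apply h2
    rw [h0, map_zero]


/-- **Lemma 3.2(b).**  Let `V` be a finite-dimensional space of differentiable
functions `[0,∞) → ℝ`.  (a) If `V` is spanned by `{Re f^q, Im f^q : q ∈ Q}` for a
finite closed set of exponents `Q`, then `V` is closed under differentiation.
(b) Conversely, if `V` is closed under differentiation, then
`Q = {q : Re f^q, Im f^q ∈ V}` is a finite closed set of exponents and
`{Re f^q, Im f^q : q ∈ Q}` spans `V`. -/
theorem closed_under_differentiation_iff_spanned_by_exponents
    (V : Submodule ℝ (↥(Set.Ici (0:ℝ)) → ℝ)) (hfin : FiniteDimensional ℝ V)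
    (hdiff : ∀ f ∈ V, DifferentiableOn ℝ (ext f) (Set.Ici 0)) :
    ((∀ Q : Set (ℕ × ℂ), Q.Finite → ExpClosed Q →
        Submodule.span ℝ (reimSet Q) = V → ∀ f ∈ V, derOn f ∈ V) ∧
     ((∀ f ∈ V, derOn f ∈ V) →
        (expSet V).Finite ∧ ExpClosed (expSet V) ∧
          Submodule.span ℝ (reimSet (expSet V)) = V)) := by
  constructor
  · intro Q _ hQc hspan
    exact partA V hdiff Q hQc hspan
  · intro hder
    exact ⟨expSet_finite V hfin hdiff hder, expClosed_expSet V hder,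
      reim_span_eq V hfin hdiff hder⟩
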